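/- In the STS(15) #61 with point set {∞} ∪ Z/7 ∪ Z/7', every automorphism fixes the point ∞, preserves the sets P = Z/7 and P' = Z/7' setwise, and is uniquely determined by its restriction to P. -/
import Mathlib


/-- A permutation is an automorphism of a block set if it maps blocks to blocks. -/
def IsAutomorphism {V : Type*} [DecidableEq V] (B : Finset (Finset V)) (σ : Equiv.Perm V) : Prop :=
  ∀ b : Finset V, b.image σ ∈ B ↔ b ∈ B

/-- The 15-point set `{∞} ∪ Z/7 ∪ (Z/7)'`. -/
inductive P15 where
  | inf : P15
  | pt : ZMod 7 → P15
  | pt' : ZMod 7 → P15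
  deriving DecidableEq, Fintype

/-- The cyclic translation by `i`: fixes `∞`, maps `n ↦ n + i` and `n' ↦ (n + i)'`. -/
def shift15 (i : ZMod 7) : P15 → P15
  | P15.inf => P15.inf
  | P15.pt n => P15.pt (n + i)
  | P15.pt' n => P15.pt' (n + i)

/-- The base blocks `{0,0',∞}, {0,1,3}, {0,1',6'}, {0,2',5'}, {0,3',4'}`. -/
def baseBlocks61 : Finset (Finset P15) :=
  { {P15.pt 0, P15.pt' 0, P15.inf},
    {P15.pt 0, P15.pt 1, P15.pt 3},
    {P15.pt 0, P15.pt' 1, P15.pt' 6},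
    {P15.pt 0, P15.pt' 2, P15.pt' 5},
    {P15.pt 0, P15.pt' 3, P15.pt' 4} }

/-- The 35 blocks of the Steiner triple system STS(15) #61, generated
cyclically mod 7 from the base blocks. -/
def blocks61 : Finset (Finset P15) :=
  Finset.univ.biUnion (fun i : ZMod 7 => baseBlocks61.image (Finset.image (shift15 i)))

/-! ### Auxiliary development: an explicit "third point" function -/

/-- Third point of the pure block `{i, i+1, i+3}` through two distinct points. -/
def tp (n m : ZMod 7) : ZMod 7 :=
  if m - n = 1 then n + 3 else if m - n = 2 then n - 1 else if m - n = 3 then n + 1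
  else if m - n = 4 then m + 1 else if m - n = 5 then m - 1 else m + 3

/-- The third point of the unique block through two distinct points (junk on the diagonal). -/
def t : P15 → P15 → P15
  | .inf, .inf => .inf
  | .inf, .pt n => .pt' n
  | .inf, .pt' n => .pt n
  | .pt n, .inf => .pt' n
  | .pt' n, .inf => .pt n
  | .pt n, .pt m => if n = m then .pt n else .pt (tp n m)
  | .pt n, .pt' m => if n = m then .inf else .pt' (2*n - m)
  | .pt' m, .pt n => if n = m then .inf else .pt' (2*n - m)
  | .pt' a, .pt' b => if a = b then .pt' a else .pt (4*(a+b))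

set_option maxRecDepth 10000 in
lemma L1 : ∀ x y : P15, x ≠ y → ({x, y, t x y} : Finset P15) ∈ blocks61 := by decide

lemma L3 : ∀ x y : P15, x ≠ y → t x y ≠ x ∧ t x y ≠ y := by decide

lemma tdiag : ∀ x : P15, t x x = x := by decide

set_option maxRecDepth 4000 in
/-- Blocks are closed under taking the third point. -/
lemma W61 {b : Finset P15} (hb : b ∈ blocks61) :
    ∀ x ∈ b, ∀ y ∈ b, x ≠ y → t x y ∈ b := by
  obtain ⟨i, -, hbi⟩ := Finset.mem_biUnion.mp hb
  obtain ⟨c, hc, rfl⟩ := Finset.mem_image.mp hbi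
  simp only [baseBlocks61, Finset.mem_insert, Finset.mem_singleton] at hc
  rcases hc with rfl | rfl | rfl | rfl | rfl <;> (revert i; decide)

/-- Any three pairwise distinct points forming a block satisfy `z = t x y`. -/
lemma third_eq {x y z : P15} (hxy : x ≠ y) (hxz : x ≠ z) (hyz : y ≠ z)
    (hb : ({x, y, z} : Finset P15) ∈ blocks61) : z = t x y := by
  have hx : x ∈ ({x, y, z} : Finset P15) := by simp
  have hy : y ∈ ({x, y, z} : Finset P15) := by simp
  have ht := W61 hb x hx y hy hxy
  simp only [Finset.mem_insert, Finset.mem_singleton] at ht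
  rcases ht with h | h | h
  · exact absurd h (L3 x y hxy).1
  · exact absurd h (L3 x y hxy).2
  · exact h.symm

/-- Automorphisms commute with the third-point function. -/
lemma key (σ : Equiv.Perm P15) (h : IsAutomorphism blocks61 σ) :
    ∀ x y : P15, σ (t x y) = t (σ x) (σ y) := by
  intro x y
  by_cases hxy : x = y
  · subst hxy; rw [tdiag, tdiag]
  · have hb : ({x, y, t x y} : Finset P15) ∈ blocks61 := L1 x y hxy
    have himg : ({x, y, t x y} : Finset P15).image σ ∈ blocks61 := (h _).mpr hb
    have heq : ({x, y, t x y} : Finset P15).image σ = {σ x, σ y, σ (t x y)} := by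
      simp [Finset.image_insert]
    rw [heq] at himg
    have hne : σ x ≠ σ y := fun e => hxy (σ.injective e)
    have hne1 : σ x ≠ σ (t x y) := fun e => (L3 x y hxy).1 (σ.injective e).symm
    have hne2 : σ y ≠ σ (t x y) := fun e => (L3 x y hxy).2 (σ.injective e).symm
    exact third_eq hne hne1 hne2 himg

/-- `(K_x ∘ K_y)^3` where `K_x a = t x a`. -/
def F3 (x y a : P15) : P15 := t x (t y (t x (t y (t x (t y a)))))

lemma keyF3 (σ : Equiv.Perm P15) (h : IsAutomorphism blocks61 σ) (x y a : P15) :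
    σ (F3 x y a) = F3 (σ x) (σ y) (σ a) := by
  simp only [F3, key σ h]

lemma d5 : ∀ (n : ZMod 7) (a : P15), F3 .inf (.pt' n) a = a := by decide
lemma d4 : ∀ n : ZMod 7, ∃ a, F3 .inf (.pt n) a ≠ a := by decide
lemma d2 : ∀ (m : ZMod 7) (y : P15), y ≠ .pt m → ∃ a, F3 (.pt m) y a ≠ a := by decide
lemma d3 : ∀ (m : ZMod 7) (y : P15), y ≠ .pt' m →
    (∀ a, F3 (.pt' m) y a = a) → y = .inf := by decide

/-- Every automorphism fixes `∞`. -/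
lemma autFix (σ : Equiv.Perm P15) (hA : IsAutomorphism blocks61 σ) :
    σ P15.inf = P15.inf := by
  have hw : ∀ (j : ZMod 7) (b : P15), F3 (σ P15.inf) (σ (P15.pt' j)) b = b := by
    intro j b
    obtain ⟨a, rfl⟩ := σ.surjective b
    rw [← keyF3 σ hA, d5]
  have hnei : ∀ j : ZMod 7, σ (P15.pt' j) ≠ σ P15.inf :=
    fun j e => P15.noConfusion (σ.injective e)
  cases hz : σ P15.inf with
  | inf => rfl
  | pt m =>
    exfalso
    rw [hz] at hw hnei
    obtain ⟨a, ha⟩ := d2 m (σ (P15.pt' 0)) (hnei 0)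
    exact ha (hw 0 a)
  | pt' m =>
    exfalso
    rw [hz] at hw hnei
    have h0 := d3 m _ (hnei 0) (hw 0)
    have h1 := d3 m _ (hnei 1) (hw 1)
    have h01 := σ.injective (h0.trans h1.symm)
    exact (by decide : P15.pt' 0 ≠ P15.pt' 1) h01

/-- Every automorphism of the STS(15) #61 fixes `∞`, preserves `P = Z/7` and
`P' = (Z/7)'` setwise, and is determined by its restriction to `P`. -/
theorem sts61_autom_fixes_inf_and_determined :
    ∀ σ : Equiv.Perm P15, IsAutomorphism blocks61 σ →
      σ P15.inf = P15.inf ∧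
      (∀ n : ZMod 7, ∃ m : ZMod 7, σ (P15.pt n) = P15.pt m) ∧
      (∀ n : ZMod 7, ∃ m : ZMod 7, σ (P15.pt' n) = P15.pt' m) ∧
      (∀ τ : Equiv.Perm P15, IsAutomorphism blocks61 τ →
        (∀ n : ZMod 7, σ (P15.pt n) = τ (P15.pt n)) → σ = τ) := by
  intro σ hA
  have hfix := autFix σ hA
  have hp : ∀ n : ZMod 7, ∃ m : ZMod 7, σ (P15.pt n) = P15.pt m := by
    intro n
    obtain ⟨a, ha⟩ := d4 n
    have hna : σ (F3 P15.inf (P15.pt n) a) ≠ σ a := fun e => ha (σ.injective e)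
    rw [keyF3 σ hA, hfix] at hna
    cases hz : σ (P15.pt n) with
    | inf => exact P15.noConfusion (σ.injective (hz.trans hfix.symm))
    | pt m => exact ⟨m, rfl⟩
    | pt' m => rw [hz] at hna; exact absurd (d5 m (σ a)) hna
  have hq : ∀ n : ZMod 7, ∃ m : ZMod 7, σ (P15.pt' n) = P15.pt' m := by
    intro n
    have hall : ∀ b, F3 P15.inf (σ (P15.pt' n)) b = b := by
      intro b
      obtain ⟨a, rfl⟩ := σ.surjective b
      rw [← hfix, ← keyF3 σ hA, d5]
    cases hz : σ (P15.pt' n) with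
    | inf => exact P15.noConfusion (σ.injective (hz.trans hfix.symm))
    | pt m =>
      obtain ⟨a, ha⟩ := d4 m
      rw [hz] at hall
      exact absurd (hall a) ha
    | pt' m => exact ⟨m, rfl⟩
  refine ⟨hfix, hp, hq, ?_⟩
  intro τ hAτ hagree
  have hfixτ := autFix τ hAτ
  apply Equiv.ext
  intro x
  cases x with
  | inf => rw [hfix, hfixτ]
  | pt n => exact hagree n
  | pt' n =>
    have h1 : σ (P15.pt' n) = t (σ (P15.pt n)) (σ P15.inf) := key σ hA (P15.pt n) P15.inf
    have h2 : τ (P15.pt' n) = t (τ (P15.pt n)) (τ P15.inf) := key τ hAτ (P15.pt n) P15.inf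
    rw [h1, h2, hagree, hfix, hfixτ]
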